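/- arXiv:2507.04863 — 5 statements merged into one kernel-verified Lean document; each statement's English description precedes it below -/
import Mathlib

section
/- If $E$ is a field of characteristic $q > 0$ with $[E : E^q] = q^\delta$ for some integer $\delta \ge 0$, then for every finite field extension $E'/E$ one has $[E' : E'^q] = q^\delta$. -/
/-- The subfield of `q`-th powers of a field `E` of characteristic `q`. -/
noncomputable def qthPowerSubfield (E : Type) [Field E] (q : ℕ) [Fact q.Prime] [CharP E q] :
    Subfield E :=
  (frobenius E q).fieldRange

/-- If `E` is a field of characteristic `q > 0` with `[E : E^q] = q ^ δ` for some
integer `δ ≥ 0`, then for every finite field extension `E'/E` one has `[E' : E'^q] = q ^ δ`. -/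
theorem qth_power_degree_stable_under_finite_extension
    (q : ℕ) [Fact q.Prime] (E : Type) [Field E] [CharP E q] (δ : ℕ)
    (hE : Module.finrank (qthPowerSubfield E q) E = q ^ δ)
    (E' : Type) [Field E'] [Algebra E E'] [FiniteDimensional E E'] [CharP E' q] :
    Module.finrank (qthPowerSubfield E' q) E' = q ^ δ := by
  classical
  set f := algebraMap E E' with hf
  -- the image of `E^q` in `E'`
  set A : Subfield E' := (qthPowerSubfield E q).map f with hA
  -- the image of `E` in `E'`
  set B₁ : Subfield E' := f.fieldRange with hB₁
  set B₂ : Subfield E' := qthPowerSubfield E' q with hB₂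
  -- frobenius commutes with `f`
  have hcomm : (frobenius E' q).comp f = f.comp (frobenius E q) := by
    ext x
    simp [frobenius_def, map_pow]
  have hAeq : A = (f.comp (frobenius E q)).fieldRange := by
    rw [hA, qthPowerSubfield, RingHom.map_fieldRange]
  -- `A` is the image of `B₁` under the frobenius of `E'`
  have hmap1 : B₁.map (frobenius E' q) = A := by
    rw [hB₁, RingHom.map_fieldRange, hcomm, hAeq]
  have hmap2 : (⊤ : Subfield E').map (frobenius E' q) = B₂ := by
    rw [hB₂, qthPowerSubfield, RingHom.fieldRange_eq_map]
  have hAB₁ : A ≤ B₁ := by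
    rw [hAeq]
    rintro x ⟨y, rfl⟩
    exact ⟨frobenius E q y, rfl⟩
  have hAB₂ : A ≤ B₂ := by
    rw [← hmap1, ← hmap2]
    exact (Subfield.gc_map_comap (frobenius E' q)).monotone_l le_top
  -- [B₁ : A] = [E : E^q] = q ^ δ
  have key1 : Subfield.relfinrank A B₁ = q ^ δ := by
    have hB : B₁ = (⊤ : Subfield E).map f := RingHom.fieldRange_eq_map f
    rw [hA, hB, Subfield.relfinrank_map_map, Subfield.relfinrank_top_right, hE]
  -- [E' : B₁] = [E' : E]
  have key2 : Module.finrank B₁ E' = Module.finrank E E' := by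
    have hsurj : Function.Surjective f.rangeRestrictField := by
      rintro ⟨y, x, rfl⟩
      exact ⟨x, rfl⟩
    have hinj : Function.Injective f.rangeRestrictField :=
      fun a b h => f.injective (congrArg Subtype.val h)
    have hr : Module.rank B₁ E' = Module.rank E E' := by
      refine (Algebra.rank_eq_of_equiv_equiv
        (RingEquiv.ofBijective f.rangeRestrictField ⟨hinj, hsurj⟩) (RingEquiv.refl E') ?_).symm
      ext x
      show ((f.rangeRestrictField x : B₁) : E') = algebraMap E E' x
      rfl
    simp only [Module.finrank, hr]
  -- [B₂ : A] = [E' : E]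
  have key3 : Subfield.relfinrank A B₂ = Module.finrank B₁ E' := by
    rw [← hmap1, ← hmap2, Subfield.relfinrank_map_map, Subfield.relfinrank_top_right]
  have t1 := Subfield.relfinrank_mul_finrank_top hAB₁
  have t2 := Subfield.relfinrank_mul_finrank_top hAB₂
  rw [key1, key2] at t1
  rw [key3, key2] at t2
  have hn : 0 < Module.finrank E E' := Module.finrank_pos
  have : Module.finrank E E' * Module.finrank B₂ E' = Module.finrank E E' * (q ^ δ) := by
    rw [t2, ← t1, Nat.mul_comm]
  exact Nat.eq_of_mul_eq_mul_left hn this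
end

section
/- Every finite extension of the perfect closure $E_{\mathrm{ins}}$ of a field $E$ of characteristic $q > 0$ inside a fixed algebraic closure $\overline{E}$ is of the form $\widetilde{E}_{\mathrm{ins}} = \widetilde{E} \cdot E_{\mathrm{ins}}$ for some finite separable extension $\widetilde{E}$ of $E$ inside $E_{\mathrm{sep}}$. -/
open IntermediateField

/-- Auxiliary: in a field extension of a perfect intermediate-field situation, an element whose
`q ^ n`-th power lies in an intermediate field containing the perfect closure lies in it. -/
theorem aux_mem_of_pow_mem (q : ℕ) [Fact q.Prime] (E : Type) [Field E]
    [CharP E q] (Ω : Type) [Field Ω] [Algebra E Ω] [IsAlgClosure E Ω]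
    (K : IntermediateField E Ω) (hK : perfectClosure E Ω ≤ K)
    {x : Ω} {n : ℕ} (hx : x ^ q ^ n ∈ K) : x ∈ K := by
  haveI : CharP Ω q := charP_of_injective_algebraMap (algebraMap E Ω).injective q
  haveI : ExpChar Ω q := ExpChar.prime (Fact.out : q.Prime)
  haveI : IsAlgClosed Ω := IsAlgClosure.isAlgClosed (R := E)
  haveI : Algebra.IsAlgebraic E Ω := IsAlgClosure.isAlgebraic
  -- `K` (as an extension of the perfect closure) is an algebraic extension of a perfect field,
  -- hence perfect.
  set L := perfectClosure E Ω
  haveI : PerfectField Ω := IsAlgClosed.perfectField Ω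
  haveI : PerfectField L := perfectClosure.perfectField E Ω
  set K' := extendScalars hK with hK'
  haveI : Algebra.IsAlgebraic L Ω := Algebra.IsAlgebraic.tower_top (K := E) L
  haveI : PerfectField K' := Algebra.IsAlgebraic.perfectField (K := L)
  haveI : CharP K' q := charP_of_injective_algebraMap (algebraMap E K').injective q
  haveI : ExpChar K' q := ExpChar.prime (Fact.out : q.Prime)
  haveI : PerfectRing K' q := PerfectField.toPerfectRing (K := K') q
  set β : K' := ⟨x ^ q ^ n, hx⟩
  set γ := (iterateFrobeniusEquiv K' q n).symm β with hγ
  have hγ2 : γ ^ q ^ n = β := by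
    have := (iterateFrobeniusEquiv K' q n).apply_symm_apply β
    rwa [iterateFrobeniusEquiv_def] at this
  have hxγ : x = (γ : Ω) := by
    have h0 : ((γ : Ω) - x) ^ q ^ n = 0 := by
      rw [sub_pow_expChar_pow]
      have : ((γ : Ω)) ^ q ^ n = x ^ q ^ n := congrArg Subtype.val hγ2
      rw [this, sub_self]
    have hqn : q ^ n ≠ 0 := pow_ne_zero n (Nat.Prime.ne_zero Fact.out)
    have := pow_eq_zero_iff hqn |>.mp h0
    exact (sub_eq_zero.mp this).symm
  exact hxγ ▸ γ.2

/-- Every finite extension of the perfect closure `E_ins` of a field `E` of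
characteristic `q > 0` inside a fixed algebraic closure `Ω` has the form
`Ẽ_ins = Ẽ ⊔ E_ins` for some finite separable extension `Ẽ` of `E` inside `E_sep`. -/
theorem finite_extension_of_perfectClosure (q : ℕ) [Fact q.Prime] (E : Type) [Field E]
    [CharP E q] (Ω : Type) [Field Ω] [Algebra E Ω] [IsAlgClosure E Ω]
    (M : IntermediateField (perfectClosure E Ω) Ω)
    [FiniteDimensional (perfectClosure E Ω) M] :
    ∃ T : IntermediateField E Ω, T ≤ separableClosure E Ω ∧ FiniteDimensional E T ∧
      M.restrictScalars E = T ⊔ perfectClosure E Ω := by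
  haveI : Algebra.IsAlgebraic E Ω := IsAlgClosure.isAlgebraic
  haveI : ExpChar (separableClosure E Ω) q := by
    haveI : CharP (separableClosure E Ω) q :=
      charP_of_injective_algebraMap (algebraMap E (separableClosure E Ω)).injective q
    exact ExpChar.prime (Fact.out : q.Prime)
  -- every element of `Ω` has a `q ^ n` power in the separable closure
  have hpow : ∀ x : Ω, ∃ n : ℕ, x ^ q ^ n ∈ separableClosure E Ω := by
    intro x
    obtain ⟨n, y, hy⟩ := IsPurelyInseparable.pow_mem (separableClosure E Ω) q x
    exact ⟨n, hy ▸ y.2⟩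
  choose nn hnn using hpow
  have hfg : M.FG := by
    apply M.fg_of_fg_toSubalgebra
    apply Subalgebra.fg_of_fg_toSubmodule
    exact (Submodule.fg_iff_finiteDimensional _).mpr ‹_›
  obtain ⟨S, hS⟩ := hfg
  set f : Ω → Ω := fun x => x ^ q ^ nn x
  refine ⟨adjoin E (f '' ↑S), adjoin_le_iff.2 ?_, ?_, ?_⟩
  · rintro _ ⟨x, -, rfl⟩
    exact hnn x
  · apply IntermediateField.finiteDimensional_adjoin
    intro x _
    exact Algebra.IsIntegral.isIntegral x
  · rw [← hS, restrictScalars_adjoin_eq_sup]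
    apply le_antisymm
    · refine sup_le le_sup_right (adjoin_le_iff.2 fun x hx => ?_)
      have hfx : f x ∈ adjoin E (f '' ↑S) := subset_adjoin E (f '' ↑S) ⟨x, hx, rfl⟩
      exact aux_mem_of_pow_mem q E Ω _ le_sup_right (n := nn x)
        (SetLike.le_def.mp le_sup_left hfx)
    · refine sup_le (adjoin_le_iff.2 ?_) le_sup_left
      rintro _ ⟨x, hx, rfl⟩
      have hx' : x ∈ adjoin E (↑S : Set Ω) := subset_adjoin E (↑S : Set Ω) hx
      exact pow_mem (SetLike.le_def.mp le_sup_right hx') _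
end

section
/- Let $E$ be a field, $p$ a prime, and $E''$ an intermediate field of $E_{\mathrm{sep}}/E'$ such that $p$ does not divide the degree of any finite subextension of $E''/E'$. Then for every $\beta \in E_{\mathrm{sep}}$ there is a finite extension $E'_\beta$ of $E'$ inside $E''$ with $[E'_\beta(\beta) : E'_\beta] = [E''(\beta) : E'']$; in particular, one may take $E'_\beta$ to be the extension of $E'$ generated by the coefficients of the minimal polynomial of $\beta$ over $E''$. -/
open IntermediateField

theorem aux_natDegree_minpoly_eq {E Ω : Type} [Field E] [Field Ω] [Algebra E Ω]
    (F0 E'' : IntermediateField E Ω) (hF0 : F0 ≤ E'') (β : Ω)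
    (hint : IsIntegral ↥F0 β) (hint'' : IsIntegral ↥E'' β)
    (hcoeff : ∀ n : ℕ, (((minpoly (↥E'') β).coeff n : ↥E'') : Ω) ∈ F0) :
    (minpoly ↥F0 β).natDegree = (minpoly ↥E'' β).natDegree := by
  set q := minpoly (↥E'') β with hq
  set f : ↥F0 →+* ↥E'' := (IntermediateField.inclusion hF0).toRingHom with hf
  have hcomp : (algebraMap (↥E'') Ω).comp f = algebraMap (↥F0) Ω := by
    ext x; rfl
  -- q lifts to a monic polynomial over F0
  have hmem : q ∈ Polynomial.lifts f := by
    rw [Polynomial.lifts_iff_coeff_lifts]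
    intro n
    exact ⟨⟨((q.coeff n : ↥E'') : Ω), hcoeff n⟩, Subtype.ext rfl⟩
  obtain ⟨q', hmap, hdeg, hmonic⟩ :=
    Polynomial.lifts_and_degree_eq_and_monic hmem (minpoly.monic hint'')
  have haev : ∀ r : Polynomial ↥F0, Polynomial.aeval β r =
      Polynomial.aeval β (r.map f) := by
    intro r
    rw [Polynomial.aeval_def, Polynomial.aeval_def, Polynomial.eval₂_map, hcomp]
  have h1 : (minpoly ↥F0 β).natDegree ≤ q.natDegree := by
    have hd : minpoly ↥F0 β ∣ q' := by
      apply minpoly.dvd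
      rw [haev, hmap]
      exact minpoly.aeval _ _
    calc (minpoly ↥F0 β).natDegree ≤ q'.natDegree :=
          Polynomial.natDegree_le_of_dvd hd hmonic.ne_zero
      _ = q.natDegree := by rw [← hmap, Polynomial.natDegree_map]
  have h2 : q.natDegree ≤ (minpoly ↥F0 β).natDegree := by
    have hd : q ∣ (minpoly ↥F0 β).map f := by
      apply minpoly.dvd
      rw [← haev]
      exact minpoly.aeval _ _
    have hne : ((minpoly ↥F0 β).map f) ≠ 0 := by
      simpa [Polynomial.Monic.ne_zero] using
        (minpoly.monic hint).map f |>.ne_zero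
    calc q.natDegree ≤ ((minpoly ↥F0 β).map f).natDegree :=
          Polynomial.natDegree_le_of_dvd hd hne
      _ = (minpoly ↥F0 β).natDegree := Polynomial.natDegree_map _
  exact le_antisymm h1 h2

/-- Let `E''` be an intermediate field of `E_sep/E'` such that `p` does not divide
the degree of any finite subextension of `E''/E'`.  Then for every `β ∈ E_sep` there is a finite
extension `E'_β` of `E'` inside `E''` with `[E'_β(β) : E'_β] = [E''(β) : E'']`; in particular,
one may take `E'_β` to be the extension of `E'` generated by the coefficients of the minimal
polynomial of `β` over `E''`. -/
theorem exists_finite_subextension_same_adjoin_degree (p : ℕ) (hp : p.Prime)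
    (E Ω : Type) [Field E] [Field Ω] [Algebra E Ω] [IsSepClosure E Ω]
    (E' E'' : IntermediateField E Ω) (hle : E' ≤ E'')
    (hdiv : ∀ F : IntermediateField E Ω, E' ≤ F → F ≤ E'' →
      relfinrank E' F ≠ 0 → ¬ p ∣ relfinrank E' F)
    (β : Ω) :
    let F0 : IntermediateField E Ω :=
      E' ⊔ IntermediateField.adjoin E
        (Set.range fun i : ℕ => (((minpoly (↥E'') β).coeff i : ↥E'') : Ω))
    F0 ≤ E'' ∧
      FiniteDimensional ↥E' ↥(IntermediateField.extendScalars (le_sup_left : E' ≤ F0)) ∧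
      Module.finrank ↥F0 ↥(IntermediateField.adjoin ↥F0 ({β} : Set Ω)) =
        Module.finrank ↥E'' ↥(IntermediateField.adjoin ↥E'' ({β} : Set Ω)) ∧
      ∃ F : IntermediateField E Ω, E' ≤ F ∧ F ≤ E'' ∧ relfinrank E' F ≠ 0 ∧
        Module.finrank ↥F ↥(IntermediateField.adjoin ↥F ({β} : Set Ω)) =
          Module.finrank ↥E'' ↥(IntermediateField.adjoin ↥E'' ({β} : Set Ω)) := by
  intro F0
  set q := minpoly (↥E'') β with hq
  set S : Set Ω := Set.range fun i : ℕ => ((q.coeff i : ↥E'') : Ω) with hS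
  have hcoeffmem : ∀ n : ℕ, ((q.coeff n : ↥E'') : Ω) ∈ F0 := fun n =>
    (le_sup_right : IntermediateField.adjoin E S ≤ F0) (IntermediateField.subset_adjoin E _ ⟨n, rfl⟩)
  have hF0le : F0 ≤ E'' := sup_le hle (IntermediateField.adjoin_le_iff.2 (by
    rintro x ⟨n, rfl⟩; exact (q.coeff n : ↥E'').2))
  have hintE : IsIntegral E β := Algebra.IsSeparable.isIntegral E β
  have hintF0 : IsIntegral ↥F0 β := hintE.tower_top
  have hintE'' : IsIntegral ↥E'' β := hintE.tower_top
  -- S is finite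
  have hSfin : S.Finite := by
    have : S ⊆ (fun x : ↥E'' => (x : Ω)) '' (↑q.coeffs ∪ {0}) := by
      rintro x ⟨n, rfl⟩
      by_cases h : q.coeff n = 0
      · exact ⟨0, Or.inr rfl, by rw [← h]⟩
      · exact ⟨q.coeff n, Or.inl (q.coeff_mem_coeffs h), rfl⟩
    exact Set.Finite.subset (((q.coeffs : Set ↥E'').toFinite.union (Set.finite_singleton 0)).image _) this
  have hExt : IntermediateField.extendScalars (le_sup_left : E' ≤ F0) =
      IntermediateField.adjoin ↥E' S := by
    apply IntermediateField.restrictScalars_injective E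
    rw [IntermediateField.extendScalars_restrictScalars,
      IntermediateField.restrictScalars_adjoin_eq_sup]
  have hfd : FiniteDimensional ↥E' ↥(IntermediateField.extendScalars (le_sup_left : E' ≤ F0)) := by
    rw [hExt]
    have : Finite S := hSfin
    exact IntermediateField.finiteDimensional_adjoin fun x _ =>
      (Algebra.IsSeparable.isIntegral E x).tower_top
  have hdegeq : Module.finrank ↥F0 ↥(IntermediateField.adjoin ↥F0 ({β} : Set Ω)) =
      Module.finrank ↥E'' ↥(IntermediateField.adjoin ↥E'' ({β} : Set Ω)) := by
    rw [IntermediateField.adjoin.finrank hintF0, IntermediateField.adjoin.finrank hintE'']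
    exact aux_natDegree_minpoly_eq F0 E'' hF0le β hintF0 hintE'' hcoeffmem
  refine ⟨hF0le, hfd, hdegeq, F0, le_sup_left, hF0le, ?_, hdegeq⟩
  rw [relfinrank_eq_finrank_of_le (le_sup_left : E' ≤ F0)]
  exact Module.finrank_pos.ne'
end

section
/- Let $E$ be a field, $X$ transcendental over $E$, $F = E(X)$, and $F_1 = E_{\mathrm{sep}}(X)$. Then $F_1/F$ is a Galois extension, and there is a canonical isomorphism $\varphi : \mathcal{G}_E \to \mathrm{Gal}(F_1/F)$ of profinite groups such that for every intermediate field $E'$ of $E_{\mathrm{sep}}/E$, the image of $\mathcal{G}_{E'}$ under $\varphi$ equals $\mathrm{Gal}(F_1/E'(X))$. -/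
open IntermediateField

/-- The canonical ring homomorphism `RatFunc E →+* RatFunc Ω` induced by a field embedding
`E → Ω`. -/
noncomputable def ratFuncMap (E Ω : Type) [Field E] [Field Ω] [Algebra E Ω] :
    RatFunc E →+* RatFunc Ω :=
  RatFunc.mapRingHom (Polynomial.mapRingHom (algebraMap E Ω)) (by
    intro x hx
    have hx0 : x ≠ 0 := mem_nonZeroDivisors_iff_ne_zero.mp hx
    refine Submonoid.mem_comap.mpr (mem_nonZeroDivisors_iff_ne_zero.mpr ?_)
    simpa using (Polynomial.map_ne_zero_iff (f := algebraMap E Ω)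
      (algebraMap E Ω).injective).mpr hx0)

namespace RatFuncGalAux

open Polynomial

variable {K L M : Type} [Field K] [Field L] [Field M]

theorem nzd (f : K →+* L) :
    nonZeroDivisors (Polynomial K) ≤ (nonZeroDivisors (Polynomial L)).comap (Polynomial.mapRingHom f) := by
  intro x hx
  have hx0 : x ≠ 0 := mem_nonZeroDivisors_iff_ne_zero.mp hx
  refine Submonoid.mem_comap.mpr (mem_nonZeroDivisors_iff_ne_zero.mpr ?_)
  simpa using (Polynomial.map_ne_zero_iff (f := f) f.injective).mpr hx0

noncomputable def mapHom (f : K →+* L) : RatFunc K →+* RatFunc L :=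
  RatFunc.mapRingHom (Polynomial.mapRingHom f) (nzd f)

theorem mapHom_algebraMap (f : K →+* L) (p : Polynomial K) :
    mapHom f (algebraMap (Polynomial K) (RatFunc K) p)
      = algebraMap (Polynomial L) (RatFunc L) (p.map f) := by
  have h := RatFunc.map_apply_div (Polynomial.mapRingHom f) (nzd f) p 1
  simp only [map_one, div_one, Polynomial.coe_mapRingHom] at h
  show (RatFunc.mapRingHom (Polynomial.mapRingHom f) (nzd f) :
      RatFunc K → RatFunc L) _ = _
  rw [RatFunc.coe_mapRingHom_eq_coe_map]
  simpa using h

theorem mapHom_C (f : K →+* L) (a : K) : mapHom f (RatFunc.C a) = RatFunc.C (f a) := by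
  rw [← RatFunc.algebraMap_C, mapHom_algebraMap, Polynomial.map_C, RatFunc.algebraMap_C]

theorem mapHom_X (f : K →+* L) : mapHom f RatFunc.X = RatFunc.X := by
  rw [← RatFunc.algebraMap_X, mapHom_algebraMap, Polynomial.map_X, RatFunc.algebraMap_X]

theorem hom_ext {R : Type*} [CommRing R] {f g : RatFunc K →+* R}
    (hC : ∀ a, f (RatFunc.C a) = g (RatFunc.C a)) (hX : f RatFunc.X = g RatFunc.X) :
    f = g := by
  apply IsLocalization.ringHom_ext (nonZeroDivisors (Polynomial K))
  apply Polynomial.ringHom_ext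
  · intro a
    simp only [RingHom.comp_apply, RatFunc.algebraMap_C]
    exact hC a
  · simp only [RingHom.comp_apply, RatFunc.algebraMap_X]
    exact hX

theorem mapHom_comp (g : L →+* M) (f : K →+* L) :
    (mapHom g).comp (mapHom f) = mapHom (g.comp f) :=
  hom_ext (fun a => by simp [mapHom_C]) (by simp [mapHom_X])

theorem mapHom_id : mapHom (RingHom.id K) = RingHom.id (RatFunc K) :=
  hom_ext (fun a => by simp [mapHom_C]) (by simp [mapHom_X])



section Main

variable (E Ω : Type) [Field E] [Field Ω] [Algebra E Ω]

theorem ratFuncMap_eq : ratFuncMap E Ω = mapHom (algebraMap E Ω) := rfl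

variable [Algebra (RatFunc E) (RatFunc Ω)]
variable (halg : algebraMap (RatFunc E) (RatFunc Ω) = ratFuncMap E Ω)

include halg

theorem algC (e : E) :
    algebraMap (RatFunc E) (RatFunc Ω) (RatFunc.C e) = RatFunc.C (algebraMap E Ω e) := by
  rw [halg, ratFuncMap_eq, mapHom_C]

theorem algX : algebraMap (RatFunc E) (RatFunc Ω) RatFunc.X = RatFunc.X := by
  rw [halg, ratFuncMap_eq, mapHom_X]

theorem kappa :
    (algebraMap (RatFunc E) (RatFunc Ω)).comp (algebraMap E (RatFunc E))
      = (RatFunc.C : Ω →+* RatFunc Ω).comp (algebraMap E Ω) := by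
  ext e
  simp only [RingHom.comp_apply, RatFunc.algebraMap_eq_C]
  exact algC E Ω halg e

/-- The coefficientwise action of `σ : Ω ≃ₐ[E] Ω` on `RatFunc Ω`, as an
algebra equivalence over `RatFunc E`. -/
noncomputable def phiAlg (σ : Ω ≃ₐ[E] Ω) : RatFunc Ω ≃ₐ[RatFunc E] RatFunc Ω :=
  AlgEquiv.ofRingEquiv (f := RingEquiv.ofRingHom
      (mapHom (σ : Ω →+* Ω)) (mapHom (σ.symm : Ω →+* Ω))
      (by refine hom_ext (fun a => ?_) ?_ <;>
            simp [mapHom_C, mapHom_X])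
      (by refine hom_ext (fun a => ?_) ?_ <;>
            simp [mapHom_C, mapHom_X]))
    (by
      intro x
      show mapHom (σ : Ω →+* Ω) (algebraMap _ _ x) = algebraMap _ _ x
      rw [halg, ratFuncMap_eq]
      have h := RingHom.congr_fun (mapHom_comp (σ : Ω →+* Ω) (algebraMap E Ω)) x
      have h2 : (σ : Ω →+* Ω).comp (algebraMap E Ω) = algebraMap E Ω := by
        ext e; simp
      rw [h2] at h
      exact h)

theorem phiAlg_C (σ : Ω ≃ₐ[E] Ω) (c : Ω) :
    phiAlg E Ω halg σ (RatFunc.C c) = RatFunc.C (σ c) :=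
  mapHom_C _ _

theorem phiAlg_X (σ : Ω ≃ₐ[E] Ω) : phiAlg E Ω halg σ RatFunc.X = RatFunc.X :=
  mapHom_X _

theorem algEquiv_ext {τ₁ τ₂ : RatFunc Ω ≃ₐ[RatFunc E] RatFunc Ω}
    (hC : ∀ c, τ₁ (RatFunc.C c) = τ₂ (RatFunc.C c)) (hX : τ₁ RatFunc.X = τ₂ RatFunc.X) :
    τ₁ = τ₂ := by
  have h : (τ₁.toAlgHom.toRingHom : RatFunc Ω →+* RatFunc Ω) = τ₂.toAlgHom.toRingHom :=
    hom_ext hC hX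
  exact AlgEquiv.ext fun x => RingHom.congr_fun h x

/-- The canonical monoid homomorphism `Gal(Ω/E) →* Gal(Ω(X)/E(X))`. -/
noncomputable def phi : (Ω ≃ₐ[E] Ω) →* (RatFunc Ω ≃ₐ[RatFunc E] RatFunc Ω) where
  toFun σ := phiAlg E Ω halg σ
  map_one' := algEquiv_ext E Ω halg
    (fun c => by show phiAlg E Ω halg 1 _ = _; rw [phiAlg_C]; rfl)
    (by show phiAlg E Ω halg 1 _ = _; rw [phiAlg_X]; rfl)
  map_mul' σ τ := algEquiv_ext E Ω halg
    (fun c => by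
      show phiAlg E Ω halg (σ * τ) _ = (phiAlg E Ω halg σ * phiAlg E Ω halg τ) _
      rw [AlgEquiv.mul_apply, phiAlg_C, phiAlg_C, phiAlg_C]; rfl)
    (by
      show phiAlg E Ω halg (σ * τ) _ = (phiAlg E Ω halg σ * phiAlg E Ω halg τ) _
      rw [AlgEquiv.mul_apply, phiAlg_X, phiAlg_X, phiAlg_X])

theorem phi_apply (σ : Ω ≃ₐ[E] Ω) : phi E Ω halg σ = phiAlg E Ω halg σ := rfl

theorem phi_injective : Function.Injective (phi E Ω halg) := by
  intro σ τ h
  ext c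
  have := congrArg (fun t => t (RatFunc.C c)) h
  simp only [phi_apply, phiAlg_C] at this
  exact (RatFunc.C : Ω →+* RatFunc Ω).injective this

end Main

section Main2

set_option linter.unusedSectionVars false

variable (E Ω : Type) [Field E] [Field Ω] [Algebra E Ω]
variable [Algebra (RatFunc E) (RatFunc Ω)]
variable (halg : algebraMap (RatFunc E) (RatFunc Ω) = ratFuncMap E Ω)

include halg

theorem aeval_C_map (p : Polynomial E) (c : Ω) :
    Polynomial.aeval (RatFunc.C c) (p.map (algebraMap E (RatFunc E)))
      = RatFunc.C (Polynomial.aeval c p) := by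
  rw [Polynomial.aeval_def, Polynomial.eval₂_map, kappa E Ω halg, ← Polynomial.hom_eval₂,
    Polynomial.aeval_def]

theorem aeval_C_minpoly (c : Ω) :
    Polynomial.aeval (RatFunc.C c) ((minpoly E c).map (algebraMap E (RatFunc E))) = 0 := by
  rw [aeval_C_map E Ω halg, minpoly.aeval, map_zero]

theorem C_isIntegral [Algebra.IsSeparable E Ω] (c : Ω) :
    IsIntegral (RatFunc E) (RatFunc.C c) := by
  have hint : IsIntegral E c :=
    (Algebra.IsAlgebraic.isAlgebraic (R := E) c).isIntegral
  exact ⟨(minpoly E c).map (algebraMap E (RatFunc E)), (minpoly.monic hint).map _, by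
    have := aeval_C_minpoly E Ω halg c
    rwa [Polynomial.aeval_def] at this⟩

theorem C_minpoly_dvd (c : Ω) :
    minpoly (RatFunc E) (RatFunc.C c) ∣ (minpoly E c).map (algebraMap E (RatFunc E)) :=
  minpoly.dvd _ _ (aeval_C_minpoly E Ω halg c)

theorem C_separable [Algebra.IsSeparable E Ω] (c : Ω) :
    IsSeparable (RatFunc E) (RatFunc.C c) :=
  Polynomial.Separable.of_dvd (Polynomial.Separable.map (Algebra.IsSeparable.isSeparable E c))
    (C_minpoly_dvd E Ω halg c)

theorem C_splits [IsSepClosure E Ω] (c : Ω) :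
    ((minpoly (RatFunc E) (RatFunc.C c)).map (algebraMap (RatFunc E) (RatFunc Ω))).Splits := by
  have hint : IsIntegral E c := (Algebra.IsAlgebraic.isAlgebraic (R := E) c).isIntegral
  have hsep : (minpoly E c).Separable := Algebra.IsSeparable.isSeparable E c
  haveI : IsSepClosed Ω := IsSepClosure.sep_closed E
  have h1 : ((minpoly E c).map ((RatFunc.C : Ω →+* RatFunc Ω).comp (algebraMap E Ω))).Splits := by
    rw [← Polynomial.map_map]
    exact (IsSepClosed.splits_codomain (f := algebraMap E Ω) _ hsep).map _
  have h2 : (((minpoly E c).map (algebraMap E (RatFunc E))).map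
      (algebraMap (RatFunc E) (RatFunc Ω))).Splits := by
    rw [Polynomial.map_map, kappa E Ω halg]
    exact h1
  refine Polynomial.Splits.of_dvd h2 ?_ (Polynomial.map_dvd _ (C_minpoly_dvd E Ω halg c))
  exact Polynomial.map_ne_zero ((Polynomial.map_ne_zero_iff (algebraMap E (RatFunc E)).injective).mpr
    (minpoly.ne_zero hint))

theorem exists_const [IsSepClosure E Ω] (τ : RatFunc Ω ≃ₐ[RatFunc E] RatFunc Ω) (c : Ω) :
    ∃ d : Ω, τ (RatFunc.C c) = RatFunc.C d := by
  have hint : IsIntegral E c := (Algebra.IsAlgebraic.isAlgebraic (R := E) c).isIntegral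
  have hsep : (minpoly E c).Separable := Algebra.IsSeparable.isSeparable E c
  haveI : IsSepClosed Ω := IsSepClosure.sep_closed E
  set p := minpoly E c with hp
  have hp0 : p ≠ 0 := minpoly.ne_zero hint
  set q := p.map (algebraMap E Ω) with hq
  have hq0 : q ≠ 0 := (Polynomial.map_ne_zero_iff (algebraMap E Ω).injective).mpr hp0
  have hsq : q.Splits :=
    IsSepClosed.splits_codomain _ hsep
  set P := p.map (algebraMap E (RatFunc E)) with hP
  have hroot : Polynomial.aeval (τ (RatFunc.C c)) P = 0 := by
    rw [Polynomial.aeval_algHom_apply τ, aeval_C_minpoly E Ω halg, map_zero]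
  set Q := P.map (algebraMap (RatFunc E) (RatFunc Ω)) with hQdef
  have hQ : Q = q.map (RatFunc.C : Ω →+* RatFunc Ω) := by
    rw [hQdef, hP, hq, Polynomial.map_map, Polynomial.map_map, kappa E Ω halg]
  have hQ0 : Q ≠ 0 := by
    rw [hQ]
    exact (Polynomial.map_ne_zero_iff (RatFunc.C : Ω →+* RatFunc Ω).injective).mpr hq0
  have hmem : τ (RatFunc.C c) ∈ Q.roots := by
    rw [Polynomial.mem_roots hQ0]
    show Q.eval (τ (RatFunc.C c)) = 0
    rw [hQdef, Polynomial.eval_map, ← Polynomial.aeval_def]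
    exact hroot
  rw [hQ, hsq.roots_map] at hmem
  obtain ⟨d, _, hd⟩ := Multiset.mem_map.mp hmem
  exact ⟨d, hd.symm⟩

theorem phi_surjective [IsSepClosure E Ω] : Function.Surjective (phi E Ω halg) := by
  intro τ
  choose g hg using exists_const E Ω halg τ
  choose g' hg' using exists_const E Ω halg τ.symm
  have hCinj := (RatFunc.C : Ω →+* RatFunc Ω).injective
  have hgg' : ∀ c, g (g' c) = c := by
    intro c
    apply hCinj
    rw [← hg, ← hg', AlgEquiv.apply_symm_apply]
  have hg'g : ∀ c, g' (g c) = c := by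
    intro c
    apply hCinj
    rw [← hg', ← hg, AlgEquiv.symm_apply_apply]
  refine ⟨{ toFun := g, invFun := g', left_inv := hg'g, right_inv := hgg',
            map_mul' := fun a b => ?_, map_add' := fun a b => ?_,
            commutes' := fun e => ?_ }, ?_⟩
  · apply hCinj; rw [map_mul, ← hg, ← hg, ← hg, map_mul, map_mul]
  · apply hCinj; rw [map_add, ← hg, ← hg, ← hg, map_add, map_add]
  · apply hCinj
    rw [← hg, ← algC E Ω halg]
    exact τ.commutes _
  · apply algEquiv_ext E Ω halg
    · intro c
      rw [phi_apply, phiAlg_C]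
      exact (hg c).symm
    · rw [phi_apply, phiAlg_X, ← algX E Ω halg, AlgEquiv.commutes]

end Main2

section Main3

set_option linter.unusedSectionVars false
set_option synthInstance.maxHeartbeats 1000000
set_option maxHeartbeats 1600000

variable (E Ω : Type) [Field E] [Field Ω] [Algebra E Ω]
variable [Algebra (RatFunc E) (RatFunc Ω)]
variable (halg : algebraMap (RatFunc E) (RatFunc Ω) = ratFuncMap E Ω)

include halg

theorem poly_mem (S : Set Ω) (p : Polynomial Ω) (h : ∀ n, p.coeff n ∈ S ∨ p.coeff n = 0) :
    algebraMap (Polynomial Ω) (RatFunc Ω) p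
      ∈ adjoin (RatFunc E) ((RatFunc.C : Ω →+* RatFunc Ω) '' S) := by
  have hX : (RatFunc.X : RatFunc Ω) ∈ adjoin (RatFunc E) ((RatFunc.C : Ω →+* RatFunc Ω) '' S) := by
    rw [← algX E Ω halg]; exact IntermediateField.algebraMap_mem _ _
  have heq : algebraMap (Polynomial Ω) (RatFunc Ω) p
      = ∑ i ∈ p.support, RatFunc.C (p.coeff i) * RatFunc.X ^ i := by
    conv_lhs => rw [Polynomial.as_sum_support_C_mul_X_pow p]
    rw [map_sum]
    refine Finset.sum_congr rfl fun i _ => ?_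
    rw [map_mul, map_pow, RatFunc.algebraMap_C, RatFunc.algebraMap_X]
  rw [heq]
  refine sum_mem fun i _ => mul_mem ?_ (pow_mem hX i)
  rcases h i with hi | hi
  · exact subset_adjoin _ _ ⟨_, hi, rfl⟩
  · rw [hi, map_zero]; exact zero_mem _

theorem ratFunc_mem (S : Set Ω) (y : RatFunc Ω)
    (h1 : ∀ n, y.num.coeff n ∈ S ∨ y.num.coeff n = 0)
    (h2 : ∀ n, y.denom.coeff n ∈ S ∨ y.denom.coeff n = 0) :
    y ∈ adjoin (RatFunc E) ((RatFunc.C : Ω →+* RatFunc Ω) '' S) := by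
  rw [← RatFunc.num_div_denom y]
  exact div_mem (poly_mem E Ω halg S _ h1) (poly_mem E Ω halg S _ h2)

theorem mem_adjoin_top (y : RatFunc Ω) :
    y ∈ adjoin (RatFunc E)
      ((RatFunc.C : Ω →+* RatFunc Ω) '' ((⊤ : IntermediateField E Ω) : Set Ω)) :=
  ratFunc_mem E Ω halg _ y (fun _ => Or.inl trivial) (fun _ => Or.inl trivial)

theorem C_adjoin_mem (S : Set Ω) {x : Ω} (hx : x ∈ adjoin E S) :
    (RatFunc.C : Ω →+* RatFunc Ω) x
      ∈ adjoin (RatFunc E) ((RatFunc.C : Ω →+* RatFunc Ω) '' S) := by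
  induction hx using IntermediateField.adjoin_induction with
  | mem c hc => exact subset_adjoin _ _ ⟨c, hc, rfl⟩
  | algebraMap e =>
    show RatFunc.C (algebraMap E Ω e) ∈ _
    rw [← algC E Ω halg]
    exact IntermediateField.algebraMap_mem _ _
  | add a b _ _ ha hb => rw [map_add]; exact add_mem ha hb
  | inv a _ ha => rw [map_inv₀]; exact inv_mem ha
  | mul a b _ _ ha hb => rw [map_mul]; exact mul_mem ha hb

theorem normalRF [IsSepClosure E Ω] : Normal (RatFunc E) (RatFunc Ω) := by
  rw [normal_iff]
  intro x
  set S := (RatFunc.C : Ω →+* RatFunc Ω) '' ((⊤ : IntermediateField E Ω) : Set Ω) with hS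
  have hx : x ∈ adjoin (RatFunc E) S := mem_adjoin_top E Ω halg x
  have hintS : ∀ s ∈ S, IsIntegral (RatFunc E) s := by
    rintro s ⟨c, -, rfl⟩; exact C_isIntegral E Ω halg c
  haveI halgS := IntermediateField.isAlgebraic_adjoin (K := RatFunc E) hintS
  have hint : IsIntegral (RatFunc E) x := by
    have h1 : IsAlgebraic (RatFunc E) (⟨x, hx⟩ : adjoin (RatFunc E) S) :=
      Algebra.IsAlgebraic.isAlgebraic _
    have h2 : IsAlgebraic (RatFunc E) x := by
      have h3 := h1.algebraMap (A := RatFunc Ω)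
      simpa using h3
    exact h2.isIntegral
  refine ⟨hint, ?_⟩
  have hsplits : ∀ s ∈ S, IsIntegral (RatFunc E) s ∧
      ((minpoly (RatFunc E) s).map (algebraMap (RatFunc E) (RatFunc Ω))).Splits := by
    rintro s ⟨c, -, rfl⟩
    exact ⟨C_isIntegral E Ω halg c, C_splits E Ω halg c⟩
  exact IntermediateField.splits_of_mem_adjoin (RatFunc E) (RatFunc Ω) hsplits hx

theorem separableRF [IsSepClosure E Ω] : Algebra.IsSeparable (RatFunc E) (RatFunc Ω) := by
  set S := (RatFunc.C : Ω →+* RatFunc Ω) '' ((⊤ : IntermediateField E Ω) : Set Ω) with hS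
  haveI hsepAdj : Algebra.IsSeparable (RatFunc E) (adjoin (RatFunc E) S) :=
    (IntermediateField.isSeparable_adjoin_iff_isSeparable _ _).mpr
      (by rintro s ⟨c, -, rfl⟩; exact C_separable E Ω halg c)
  refine ⟨fun x => ?_⟩
  have hx : x ∈ adjoin (RatFunc E) S := mem_adjoin_top E Ω halg x
  have h1 : IsSeparable (RatFunc E) (⟨x, hx⟩ : adjoin (RatFunc E) S) :=
    Algebra.IsSeparable.isSeparable _ _
  have h2 : minpoly (RatFunc E) x = minpoly (RatFunc E) (⟨x, hx⟩ : adjoin (RatFunc E) S) := by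
    have h3 := minpoly.algebraMap_eq (A := RatFunc E)
      (algebraMap (adjoin (RatFunc E) S) (RatFunc Ω)).injective
      (⟨x, hx⟩ : adjoin (RatFunc E) S)
    simpa using h3
  show (minpoly (RatFunc E) x).Separable
  rw [h2]
  exact h1

theorem isGaloisRF [IsSepClosure E Ω] : IsGalois (RatFunc E) (RatFunc Ω) := by
  haveI := separableRF E Ω halg
  haveI := normalRF E Ω halg
  exact ⟨⟩

theorem map_fixing [IsSepClosure E Ω] (E' : IntermediateField E Ω) :
    Subgroup.map (phi E Ω halg) (fixingSubgroup E')
      = fixingSubgroup (adjoin (RatFunc E)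
          ((RatFunc.C : Ω →+* RatFunc Ω) '' (E' : Set Ω))) := by
  ext τ
  rw [Subgroup.mem_map]
  constructor
  · rintro ⟨σ, hσ, rfl⟩
    rw [IntermediateField.mem_fixingSubgroup_iff]
    intro x hx
    induction hx using IntermediateField.adjoin_induction with
    | mem y hy =>
      obtain ⟨c, hc, rfl⟩ := hy
      rw [phi_apply, phiAlg_C]
      exact congrArg RatFunc.C (hσ ⟨c, hc⟩)
    | algebraMap r => exact (phi E Ω halg σ).commutes r
    | add a b _ _ ha hb => rw [map_add, ha, hb]
    | inv a _ ha => rw [map_inv₀, ha]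
    | mul a b _ _ ha hb => rw [map_mul, ha, hb]
  · intro hτ
    obtain ⟨σ, rfl⟩ := phi_surjective E Ω halg τ
    refine ⟨σ, ?_, rfl⟩
    intro c
    have h1 := (IntermediateField.mem_fixingSubgroup_iff _ _).mp hτ (RatFunc.C c)
      (subset_adjoin _ _ ⟨c, c.2, rfl⟩)
    rw [phi_apply, phiAlg_C] at h1
    exact (RatFunc.C : Ω →+* RatFunc Ω).injective h1

end Main3

section Main4

set_option linter.unusedSectionVars false
set_option synthInstance.maxHeartbeats 1000000
set_option maxHeartbeats 1600000

open scoped Topology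

variable (E Ω : Type) [Field E] [Field Ω] [Algebra E Ω]
variable [Algebra (RatFunc E) (RatFunc Ω)]
variable (halg : algebraMap (RatFunc E) (RatFunc Ω) = ratFuncMap E Ω)

include halg

theorem cont_phi [IsSepClosure E Ω] : Continuous (phi E Ω halg) := by
  apply continuous_of_continuousAt_one (phi E Ω halg)
  rw [ContinuousAt, map_one, Filter.tendsto_def]
  intro s hs
  rw [krullTopology_mem_nhds_one_iff] at hs
  obtain ⟨L, hLfin, hLsub⟩ := hs
  have hfg : L.FG := L.fg_of_fg_toSubalgebra
    (Subalgebra.fg_of_fg_toSubmodule ((Submodule.fg_iff_finiteDimensional _).mpr hLfin))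
  obtain ⟨t, ht⟩ := hfg
  classical
  let T : Set Ω := ⋃ y ∈ (t : Set (RatFunc Ω)), ((y.num.coeffs : Set Ω) ∪ (y.denom.coeffs : Set Ω))
  have hTfin : T.Finite := Set.Finite.biUnion t.finite_toSet
    (fun y _ => Set.finite_union.mpr ⟨y.num.coeffs.finite_toSet, y.denom.coeffs.finite_toSet⟩)
  haveI := hTfin.to_subtype
  have hE'fin : FiniteDimensional E (adjoin E T) :=
    IntermediateField.finiteDimensional_adjoin
      (fun x _ => (Algebra.IsAlgebraic.isAlgebraic (R := E) x).isIntegral)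
  rw [krullTopology_mem_nhds_one_iff]
  refine ⟨adjoin E T, hE'fin, ?_⟩
  intro σ hσ
  show phi E Ω halg σ ∈ s
  apply hLsub
  have h1 : phi E Ω halg σ ∈ fixingSubgroup (adjoin (RatFunc E)
      ((RatFunc.C : Ω →+* RatFunc Ω) '' ((adjoin E T : IntermediateField E Ω) : Set Ω))) := by
    rw [← map_fixing E Ω halg]
    exact ⟨σ, hσ, rfl⟩
  have hL : L ≤ adjoin (RatFunc E)
      ((RatFunc.C : Ω →+* RatFunc Ω) '' ((adjoin E T : IntermediateField E Ω) : Set Ω)) := by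
    rw [← ht, IntermediateField.adjoin_le_iff]
    intro y hy
    refine ratFunc_mem E Ω halg _ y (fun n => ?_) (fun n => ?_)
    · by_cases h0 : y.num.coeff n = 0
      · exact Or.inr h0
      · refine Or.inl (subset_adjoin _ _ ?_)
        exact Set.mem_biUnion hy (Set.mem_union_left _ (y.num.coeff_mem_coeffs h0))
    · by_cases h0 : y.denom.coeff n = 0
      · exact Or.inr h0
      · refine Or.inl (subset_adjoin _ _ ?_)
        exact Set.mem_biUnion hy (Set.mem_union_right _ (y.denom.coeff_mem_coeffs h0))
  exact IntermediateField.fixingSubgroup_antitone hL h1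

theorem cont_inv [IsSepClosure E Ω]
    (ψ : (RatFunc Ω ≃ₐ[RatFunc E] RatFunc Ω) →* (Ω ≃ₐ[E] Ω))
    (hψ : ∀ τ, phi E Ω halg (ψ τ) = τ) : Continuous ψ := by
  apply continuous_of_continuousAt_one ψ
  rw [ContinuousAt, map_one, Filter.tendsto_def]
  intro s hs
  rw [krullTopology_mem_nhds_one_iff] at hs
  obtain ⟨E'', hfin, hsub⟩ := hs
  have hfg : E''.FG := E''.fg_of_fg_toSubalgebra
    (Subalgebra.fg_of_fg_toSubmodule ((Submodule.fg_iff_finiteDimensional _).mpr hfin))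
  obtain ⟨t, ht⟩ := hfg
  rw [krullTopology_mem_nhds_one_iff]
  have hfinL : FiniteDimensional (RatFunc E)
      (adjoin (RatFunc E) ((RatFunc.C : Ω →+* RatFunc Ω) '' (t : Set Ω))) := by
    haveI : Finite ((RatFunc.C : Ω →+* RatFunc Ω) '' (t : Set Ω)) :=
      (t.finite_toSet.image _).to_subtype
    exact IntermediateField.finiteDimensional_adjoin
      (by rintro x ⟨c, -, rfl⟩; exact C_isIntegral E Ω halg c)
  refine ⟨_, hfinL, ?_⟩
  intro τ hτ
  show ψ τ ∈ s
  apply hsub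
  have hle : adjoin (RatFunc E) ((RatFunc.C : Ω →+* RatFunc Ω) '' (E'' : Set Ω))
      ≤ adjoin (RatFunc E) ((RatFunc.C : Ω →+* RatFunc Ω) '' (t : Set Ω)) := by
    rw [IntermediateField.adjoin_le_iff]
    rintro z ⟨c, hc, rfl⟩
    have hct : c ∈ adjoin E (t : Set Ω) := by rw [ht]; exact hc
    exact C_adjoin_mem E Ω halg _ hct
  have hτ2 : τ ∈ fixingSubgroup (adjoin (RatFunc E)
      ((RatFunc.C : Ω →+* RatFunc Ω) '' (E'' : Set Ω))) :=
    IntermediateField.fixingSubgroup_antitone hle hτ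
  rw [← map_fixing E Ω halg] at hτ2
  obtain ⟨σ, hσ, hστ⟩ := hτ2
  have hσψ : σ = ψ τ := by
    apply phi_injective E Ω halg
    rw [hψ, hστ]
  rwa [← hσψ]

end Main4

end RatFuncGalAux

open RatFuncGalAux in
/-- Let `F = E(X)` and `F₁ = E_sep(X)`.  Then `F₁/F` is Galois and there is a
canonical isomorphism of profinite groups `𝒢_E ≃ Gal(F₁/F)` (acting on coefficients) under
which, for every intermediate field `E'` of `E_sep/E`, the image of `𝒢_{E'}` is
`Gal(F₁/E'(X))`. -/
theorem ratFunc_galois_and_galoisGroup_iso (E Ω : Type) [Field E] [Field Ω] [Algebra E Ω]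
    [IsSepClosure E Ω] :
    letI : Algebra (RatFunc E) (RatFunc Ω) := (ratFuncMap E Ω).toAlgebra
    IsGalois (RatFunc E) (RatFunc Ω) ∧
      ∃ φ : (Ω ≃ₐ[E] Ω) ≃* (RatFunc Ω ≃ₐ[RatFunc E] RatFunc Ω),
        Continuous φ ∧ Continuous φ.symm ∧
        (∀ (σ : Ω ≃ₐ[E] Ω) (x : Ω), (φ σ) (RatFunc.C x) = RatFunc.C (σ x)) ∧
        ∀ E' : IntermediateField E Ω,
          Subgroup.map φ.toMonoidHom (fixingSubgroup E') =
            fixingSubgroup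
              (IntermediateField.adjoin (RatFunc E) (RatFunc.C '' (E' : Set Ω))) := by
  letI : Algebra (RatFunc E) (RatFunc Ω) := (ratFuncMap E Ω).toAlgebra
  have halg : algebraMap (RatFunc E) (RatFunc Ω) = ratFuncMap E Ω := rfl
  refine ⟨isGaloisRF E Ω halg, ?_⟩
  refine ⟨MulEquiv.ofBijective (phi E Ω halg)
    ⟨phi_injective E Ω halg, phi_surjective E Ω halg⟩, ?_, ?_, ?_, ?_⟩
  · exact cont_phi E Ω halg
  · refine cont_inv E Ω halg
      (MulEquiv.ofBijective (phi E Ω halg)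
        ⟨phi_injective E Ω halg, phi_surjective E Ω halg⟩).symm.toMonoidHom
      (fun τ => ?_)
    exact (MulEquiv.ofBijective (phi E Ω halg)
      ⟨phi_injective E Ω halg, phi_surjective E Ω halg⟩).apply_symm_apply τ
  · intro σ x
    exact phiAlg_C E Ω halg σ x
  · intro E'
    have hmono : (MulEquiv.ofBijective (phi E Ω halg)
        ⟨phi_injective E Ω halg, phi_surjective E Ω halg⟩).toMonoidHom = phi E Ω halg := by
      ext σ; rfl
    rw [hmono]
    exact map_fixing E Ω halg E'
end

section
/- Let $E$ be a field of characteristic $q > 0$, $B$ a $q$-basis of $E$ over $E^q$ (empty if $E = E^q$), and $U$ a separable algebraic extension of $E$. Then $B$ is a $q$-basis of $U$ over $U^q$; in particular $[U : U^q] = [E : E^q]$ whenever $[E : E^q]$ is finite. -/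
open Finsupp Submodule

section Aux

variable (q : ℕ) [Fact q.Prime]
variable {E U : Type} [Field E] [CharP E q] [Field U] [Algebra E U] [CharP U q]

omit [CharP E q] in
theorem aux_pow_expand {J : Type} (b : Module.Basis J E U) (x : U) :
    Finsupp.linearCombination E (fun j => b j ^ q)
      (Finsupp.mapRange (· ^ q) (zero_pow (Fact.out (p := q.Prime)).ne_zero) (b.repr x))
      = x ^ q := by
  haveI : ExpChar U q := ExpChar.prime Fact.out
  conv_rhs => rw [← b.linearCombination_repr x]
  rw [Finsupp.linearCombination_apply, Finsupp.linearCombination_apply,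
    Finsupp.sum_mapRange_index (by simp), ← frobenius_def (p := q), map_finsuppSum]
  exact Finsupp.sum_congr fun j _ => by rw [frobenius_def, smul_pow]

theorem aux_li [Algebra.IsSeparable E U] {I : Type} {w : I → E}
    (hw : LinearIndependent ((frobenius E q).fieldRange) w) :
    LinearIndependent ((frobenius U q).fieldRange) (fun i => algebraMap E U (w i)) := by
  classical
  haveI : ExpChar E q := ExpChar.prime Fact.out
  have hq0 : q ≠ 0 := (Fact.out (p := q.Prime)).ne_zero
  rw [linearIndependent_iff']
  intro s g hsum i hi
  choose u hu using fun i => RingHom.mem_fieldRange.mp (g i).2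
  let b := Module.Basis.ofVectorSpace E U
  have li' : LinearIndependent E (fun j => b j ^ q) := by
    have := b.linearIndependent.map_pow_expChar_pow_of_isSeparable q 1
    simpa [pow_one] using this
  set G := ∑ i ∈ s, w i • Finsupp.mapRange (· ^ q) (zero_pow hq0) (b.repr (u i)) with hG
  have htot : Finsupp.linearCombination E (fun j => b j ^ q) G = 0 := by
    rw [hG, map_sum]
    have : ∀ i ∈ s, Finsupp.linearCombination E (fun j => b j ^ q)
        (w i • Finsupp.mapRange (· ^ q) (zero_pow hq0) (b.repr (u i)))
        = g i • algebraMap E U (w i) := by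
      intro i _
      rw [map_smul, aux_pow_expand q b (u i)]
      show w i • (u i ^ q) = ↑(g i) * algebraMap E U (w i)
      rw [← hu i, frobenius_def, Algebra.smul_def, mul_comm]
    rw [Finset.sum_congr rfl this, hsum]
  have hG0 : G = 0 := linearIndependent_iff.mp li' G htot
  have hcoord : ∀ j, ∀ i' ∈ s, (b.repr (u i')) j = 0 := by
    intro j i' hi'
    have hj : ∑ i'' ∈ s, w i'' * ((b.repr (u i'')) j) ^ q = 0 := by
      have := DFunLike.congr_fun hG0 j
      simpa [hG, Finsupp.finset_sum_apply, Finsupp.smul_apply, smul_eq_mul,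
        Finsupp.mapRange_apply] using this
    set c : I → ((frobenius E q).fieldRange) :=
      fun i'' => ⟨((b.repr (u i'')) j) ^ q, (b.repr (u i'')) j, by rw [frobenius_def]⟩ with hc
    have hs : ∑ i'' ∈ s, c i'' • w i'' = 0 := by
      have heq : ∀ i'' ∈ s, c i'' • w i'' = w i'' * ((b.repr (u i'')) j) ^ q :=
        fun i'' _ => mul_comm _ _
      rw [Finset.sum_congr rfl heq, hj]
    have h0 : ((b.repr (u i')) j) ^ q = 0 :=
      congrArg Subtype.val (linearIndependent_iff'.mp hw s c hs i' hi')
    exact pow_eq_zero_iff hq0 |>.mp h0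
  have hui : u i = 0 := by
    have h0 : b.repr (u i) = 0 := Finsupp.ext fun j => hcoord j i hi
    exact (b.repr).map_eq_zero_iff.mp h0
  refine Subtype.ext ?_
  rw [show ((0 : (frobenius U q).fieldRange) : U) = 0 from rfl, ← hu i, hui, map_zero]

theorem aux_span [Algebra.IsSeparable E U] {I : Type} {w : I → E}
    (hw : ⊤ ≤ span ((frobenius E q).fieldRange) (Set.range w)) :
    ⊤ ≤ span ((frobenius U q).fieldRange)
      (Set.range fun i => algebraMap E U (w i)) := by
  haveI : ExpChar E q := ExpChar.prime Fact.out
  set Uq := (frobenius U q).fieldRange with hUq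
  set M := Set.range fun i => algebraMap E U (w i) with hM
  have hmem : ∀ c : E, c ∈ (frobenius E q).fieldRange → algebraMap E U c ∈ Uq := by
    rintro _ ⟨y, rfl⟩
    exact ⟨algebraMap E U y, by rw [frobenius_def, frobenius_def, map_pow]⟩
  have lemA : ∀ x : E, algebraMap E U x ∈ span Uq M := by
    intro x
    have hx : x ∈ span ((frobenius E q).fieldRange) (Set.range w) := hw trivial
    induction hx using span_induction with
    | mem y hy => obtain ⟨i, rfl⟩ := hy; exact subset_span ⟨i, rfl⟩
    | zero => rw [map_zero]; exact zero_mem _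
    | add y z _ _ hy hz => rw [map_add]; exact add_mem hy hz
    | smul c y _ hy =>
      have heq : algebraMap E U (c • y)
          = (⟨algebraMap E U ↑c, hmem _ c.2⟩ : Uq) • algebraMap E U y := by
        show algebraMap E U (↑c * y) = algebraMap E U ↑c * algebraMap E U y
        rw [map_mul]
      rw [heq]; exact smul_mem _ _ hy
  have lemB : ∀ (a : E) (t : U), t ∈ span Uq M → algebraMap E U a * t ∈ span Uq M := by
    intro a t ht
    induction ht using span_induction with
    | mem y hy => obtain ⟨i, rfl⟩ := hy; rw [← map_mul]; exact lemA _
    | zero => rw [mul_zero]; exact zero_mem _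
    | add y z _ _ hy hz => rw [mul_add]; exact add_mem hy hz
    | smul c y _ hy =>
      have heq : algebraMap E U a * (c • y) = c • (algebraMap E U a * y) := by
        show algebraMap E U a * (↑c * y) = ↑c * (algebraMap E U a * y)
        ring
      rw [heq]; exact smul_mem _ _ hy
  intro x hxt
  clear hxt
  have hx : x ∈ span E (Set.range fun y : U => (id y) ^ q ^ 1) := by
    rw [Field.span_map_pow_expChar_pow_eq_top_of_isSeparable q 1 (v := (id : U → U))
      (by rw [Set.range_id, span_univ])]
    trivial
  clear hw
  induction hx using span_induction with
  | mem y hy =>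
    obtain ⟨z, rfl⟩ := hy
    have h1 : (1 : U) ∈ span Uq M := by simpa using lemA 1
    have h2 := smul_mem (span Uq M) (⟨z ^ q, z, by rw [frobenius_def]⟩ : Uq) h1
    have heq : (⟨z ^ q, z, by rw [frobenius_def]⟩ : Uq) • (1 : U) = (id z) ^ q ^ 1 := by
      show z ^ q * 1 = z ^ q ^ 1
      rw [mul_one, pow_one]
    rwa [heq] at h2
  | zero => exact zero_mem _
  | add y z _ _ hy hz => exact add_mem hy hz
  | smul a y _ hy => rw [Algebra.smul_def]; exact lemB a y hy

end Aux

/-- `B` is a `q`-basis of `E` over `E^q`: the monomials `∏ b^(e_b)` with `0 ≤ e_b < q` form a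
basis of `E` as a vector space over the subfield `E^q` of `q`-th powers. -/
def IsQBasis (q : ℕ) [Fact q.Prime] (E : Type) [Field E] [CharP E q] (B : Set E) : Prop :=
  ∃ basis : Module.Basis {f : B →₀ ℕ // ∀ b : B, f b < q} ((frobenius E q).fieldRange) E,
    ∀ f : {f : B →₀ ℕ // ∀ b : B, f b < q},
      basis f = (f : B →₀ ℕ).prod fun b e => (b : E) ^ e

/-- if `B` is a `q`-basis of `E` over `E^q` and `U` is a separable algebraic
extension of `E`, then (the image of) `B` is a `q`-basis of `U` over `U^q`; in particular
`[U : U^q] = [E : E^q]`. -/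
theorem qBasis_stable_under_separable_extension (q : ℕ) [Fact q.Prime]
    (E : Type) [Field E] [CharP E q] (B : Set E) (hB : IsQBasis q E B)
    (U : Type) [Field U] [Algebra E U] [CharP U q] [Algebra.IsSeparable E U] :
    IsQBasis q U (algebraMap E U '' B) ∧
      Module.finrank ((frobenius U q).fieldRange) U =
        Module.finrank ((frobenius E q).fieldRange) E := by
  classical
  obtain ⟨bE, hbE⟩ := hB
  set e := algebraMap E U with he
  set B' : Set U := ⇑e '' B with hB'
  let eB : B ≃ B' := Equiv.Set.image (⇑e) B (algebraMap E U).injective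
  have hcond : ∀ f : B →₀ ℕ, (∀ b : B, f b < q) ↔
      (∀ b' : B', (Finsupp.equivCongrLeft eB f) b' < q) := by
    intro f
    constructor
    · intro h b'
      rw [Finsupp.equivCongrLeft_apply, Finsupp.equivMapDomain_apply]
      exact h _
    · intro h b
      have := h (eB b)
      rwa [Finsupp.equivCongrLeft_apply, Finsupp.equivMapDomain_apply,
        Equiv.symm_apply_apply] at this
  let ι : {f : B →₀ ℕ // ∀ b : B, f b < q} ≃ {f : B' →₀ ℕ // ∀ b : B', f b < q} :=
    Equiv.subtypeEquiv (Finsupp.equivCongrLeft eB) hcond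
  set vE : {f : B →₀ ℕ // ∀ b : B, f b < q} → E :=
    fun f => (f : B →₀ ℕ).prod fun b n => (b : E) ^ n with hvE
  set v : {f : B' →₀ ℕ // ∀ b : B', f b < q} → U :=
    fun f => (f : B' →₀ ℕ).prod fun b n => (b : U) ^ n with hv
  have hkey : ∀ f, v (ι f) = e (vE f) := by
    intro f
    rw [hv, hvE]
    show (Finsupp.equivMapDomain (eB : B ≃ B') (f : B →₀ ℕ)).prod (fun b n => (b : U) ^ n)
      = e ((f : B →₀ ℕ).prod fun b n => (b : E) ^ n)
    rw [Finsupp.prod_equivMapDomain, map_finsuppProd]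
    refine Finsupp.prod_congr fun b n => ?_
    rw [map_pow]
    rfl
  have hwfun : ⇑bE = vE := funext hbE
  have hliE : LinearIndependent ((frobenius E q).fieldRange) vE := by
    rw [← hwfun]; exact bE.linearIndependent
  have hspE : span ((frobenius E q).fieldRange) (Set.range vE) = ⊤ := by
    rw [← hwfun]; exact bE.span_eq
  have hli : LinearIndependent ((frobenius U q).fieldRange) (fun i => e (vE i)) :=
    aux_li q hliE
  have hsp : ⊤ ≤ span ((frobenius U q).fieldRange) (Set.range fun i => e (vE i)) :=
    aux_span q hspE.ge
  let bU0 : Module.Basis _ ((frobenius U q).fieldRange) U := Module.Basis.mk hli hsp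
  let bU : Module.Basis {f : B' →₀ ℕ // ∀ b : B', f b < q} ((frobenius U q).fieldRange) U :=
    bU0.reindex ι
  have hbU : ∀ f', bU f' = v f' := by
    intro f'
    rw [show bU f' = bU0 (ι.symm f') from bU0.reindex_apply ι f', Module.Basis.mk_apply,
      ← hkey (ι.symm f'), Equiv.apply_symm_apply]
  constructor
  · exact ⟨bU, hbU⟩
  · have h1 : Module.rank ((frobenius U q).fieldRange) U
        = Module.rank ((frobenius E q).fieldRange) E := by
      rw [← bU.mk_eq_rank'', ← bE.mk_eq_rank'']
      exact Cardinal.mk_congr ι.symm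
    unfold Module.finrank
    rw [h1]
end
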